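/- Under the hypotheses of the BGK H-theorem (f almost everywhere positive, integrable with finite second moment, n > 0, T > 0, and the required integrability of f·log f, f·log M, M·log f, M·log M, where M = M[f]), the entropy dissipation vanishes, ∫_{ℝ^D} (M(v) − f(v)) · log f(v) dv = 0, if and only if f = M[f] almost everywhere; that is, equality in the H-theorem holds exactly for Maxwellian equilibrium states. -/

import Mathlib

open MeasureTheory

/-- The Maxwellian distribution with number density `n`, mean velocity `vb`,
temperature `T` and particle mass `m` on `ℝ^D`. -/
noncomputable def maxwellian (D : ℕ) (m n T : ℝ) (vb : EuclideanSpace ℝ (Fin D))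
    (v : EuclideanSpace ℝ (Fin D)) : ℝ :=
  n * (m / (2 * Real.pi * T)) ^ ((D : ℝ) / 2) * Real.exp (-(m * ‖v - vb‖ ^ 2) / (2 * T))

open Real MeasureTheory Set

lemma integral_sq_exp_Ioi {b : ℝ} (hb : 0 < b) :
    ∫ x in Ioi (0:ℝ), x ^ 2 * rexp (-b * x ^ 2) = 1 / (2 * b) * Real.sqrt (π / b) / 2 := by
  have h := integral_comp_rpow_Ioi_of_pos
    (g := fun y : ℝ => Real.sqrt y * rexp (-(b * y))) (p := 2) two_pos
  have hL : (∫ x in Ioi (0:ℝ), ((2:ℝ) * x ^ ((2:ℝ) - 1)) •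
      (Real.sqrt (x ^ (2:ℝ)) * rexp (-(b * x ^ (2:ℝ)))))
      = 2 * ∫ x in Ioi (0:ℝ), x ^ 2 * rexp (-b * x ^ 2) := by
    rw [← integral_const_mul]
    refine setIntegral_congr_fun measurableSet_Ioi (fun x hx => ?_)
    have hx0 : (0:ℝ) < x := hx
    have h2 : x ^ (2:ℝ) = x ^ 2 := by
      rw [show ((2:ℝ)) = ((2:ℕ):ℝ) by norm_num, Real.rpow_natCast]
    rw [h2, show ((2:ℝ) - 1) = 1 by norm_num, Real.rpow_one, Real.sqrt_sq hx0.le]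
    simp only [smul_eq_mul]
    ring_nf
  have hR : (∫ y in Ioi (0:ℝ), Real.sqrt y * rexp (-(b * y)))
      = (1 / b) ^ ((3:ℝ)/2) * Real.Gamma ((3:ℝ)/2) := by
    rw [← integral_rpow_mul_exp_neg_mul_Ioi (by norm_num : (0:ℝ) < 3/2) hb]
    refine setIntegral_congr_fun measurableSet_Ioi (fun y hy => ?_)
    have hy0 : (0:ℝ) < y := hy
    rw [Real.sqrt_eq_rpow, show ((3:ℝ)/2 - 1) = 1/2 by norm_num]
  have hG : Real.Gamma ((3:ℝ)/2) = Real.sqrt π / 2 := by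
    rw [show ((3:ℝ)/2) = 1/2 + 1 by norm_num, Real.Gamma_add_one (by norm_num),
      Real.Gamma_one_half_eq]
    ring
  rw [hL, hR, hG] at h
  have hb' : (0:ℝ) < 1 / b := by positivity
  have key : (1 / b) ^ ((3:ℝ)/2) = 1 / b * (1 / b) ^ ((1:ℝ)/2) := by
    rw [show ((3:ℝ)/2) = 1 + 1/2 by norm_num, Real.rpow_add hb', Real.rpow_one]
  have hsq : Real.sqrt (π / b) = Real.sqrt π * (1 / b) ^ ((1:ℝ)/2) := by
    rw [show π / b = π * (1 / b) by ring, Real.sqrt_mul pi_pos.le]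
    rw [Real.sqrt_eq_rpow (1/b)]
  rw [key] at h
  rw [hsq]
  linear_combination h / 2

lemma integrable_sq_exp {b : ℝ} (hb : 0 < b) :
    Integrable (fun x : ℝ => x ^ 2 * rexp (-b * x ^ 2)) := by
  have := integrable_rpow_mul_exp_neg_mul_sq hb (by norm_num : (-1:ℝ) < 2)
  refine this.congr (Filter.Eventually.of_forall fun x => ?_)
  simp [Real.rpow_natCast x 2]

lemma integral_sq_exp {b : ℝ} (hb : 0 < b) :
    ∫ x : ℝ, x ^ 2 * rexp (-b * x ^ 2) = 1 / (2 * b) * Real.sqrt (π / b) := by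
  have hint := integrable_sq_exp hb
  have hsplit := integral_add_compl (measurableSet_Ioi (a := (0:ℝ))) hint
  rw [compl_Ioi] at hsplit
  have hIic : ∫ x in Iic (0:ℝ), x ^ 2 * rexp (-b * x ^ 2)
      = ∫ x in Ioi (0:ℝ), x ^ 2 * rexp (-b * x ^ 2) := by
    rw [show Iic (0:ℝ) = Iic (-0 : ℝ) by norm_num, ← integral_comp_neg_Ioi]
    refine setIntegral_congr_fun measurableSet_Ioi (fun x _ => ?_)
    simp [neg_sq]
  rw [hIic, integral_sq_exp_Ioi hb] at hsplit
  rw [← hsplit]; ring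

lemma euclid_norm_symm_sq {D : ℕ} (x : Fin D → ℝ) :
    ‖(MeasurableEquiv.toLp 2 (Fin D → ℝ)) x‖ ^ 2 = ∑ i, x i ^ 2 := by
  rw [EuclideanSpace.norm_eq, Real.sq_sqrt (by positivity)]
  simp [MeasurableEquiv.coe_toLp, PiLp.toLp_apply, sq_abs]

lemma euclid_integrable_exp {D : ℕ} {b : ℝ} (hb : 0 < b) :
    Integrable (fun v : EuclideanSpace ℝ (Fin D) => rexp (-b * ‖v‖ ^ 2)) := by
  rw [← ((EuclideanSpace.volume_preserving_symm_measurableEquiv_toLp (Fin D)).symm).integrable_comp_emb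
    (MeasurableEquiv.measurableEmbedding _), MeasurableEquiv.symm_symm]
  have : ((fun v : EuclideanSpace ℝ (Fin D) => rexp (-b * ‖v‖ ^ 2)) ∘
      (MeasurableEquiv.toLp 2 (Fin D → ℝ)))
      = fun x : Fin D → ℝ => ∏ i, rexp (-b * x i ^ 2) := by
    ext x
    simp only [Function.comp_apply, euclid_norm_symm_sq, Finset.mul_sum, ← Real.exp_sum,
      ← Finset.sum_neg_distrib]
  rw [this]
  exact Integrable.fintype_prod (f := fun _ (t : ℝ) => rexp (-b * t ^ 2))
    (fun _ => integrable_exp_neg_mul_sq hb)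

lemma euclid_integral_exp {D : ℕ} {b : ℝ} (hb : 0 < b) :
    ∫ v : EuclideanSpace ℝ (Fin D), rexp (-b * ‖v‖ ^ 2) = (π / b) ^ ((D : ℝ) / 2) := by
  rw [GaussianFourier.integral_rexp_neg_mul_sq_norm hb]
  norm_num [finrank_euclideanSpace_fin]

lemma euclid_integral_sq_exp {D : ℕ} (hD : 0 < D) {b : ℝ} (hb : 0 < b) :
    ∫ v : EuclideanSpace ℝ (Fin D), ‖v‖ ^ 2 * rexp (-b * ‖v‖ ^ 2)
      = (D : ℝ) / (2 * b) * (π / b) ^ ((D : ℝ) / 2) := by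
  classical
  set F : Fin D → Fin D → ℝ → ℝ :=
    fun i j t => (if j = i then t ^ 2 else 1) * rexp (-b * t ^ 2) with hF
  have hFint : ∀ i j, Integrable (F i j) := by
    intro i j
    by_cases h : j = i
    · simpa [hF, h] using integrable_sq_exp hb
    · simpa [hF, h] using integrable_exp_neg_mul_sq hb
  have key : ∫ v : EuclideanSpace ℝ (Fin D), ‖v‖ ^ 2 * rexp (-b * ‖v‖ ^ 2)
      = ∑ i : Fin D, ∏ j : Fin D, ∫ t : ℝ, F i j t := by
    rw [← ((EuclideanSpace.volume_preserving_symm_measurableEquiv_toLp (Fin D)).symm).integral_comp'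
      (fun v : EuclideanSpace ℝ (Fin D) => ‖v‖ ^ 2 * rexp (-b * ‖v‖ ^ 2)), MeasurableEquiv.symm_symm]
    have hfun : ∀ x : Fin D → ℝ,
        ‖(MeasurableEquiv.toLp 2 (Fin D → ℝ)) x‖ ^ 2 *
          rexp (-b * ‖(MeasurableEquiv.toLp 2 (Fin D → ℝ)) x‖ ^ 2)
        = ∑ i : Fin D, ∏ j : Fin D, F i j (x j) := by
      intro x
      have hprod : ∀ i : Fin D, (∏ j : Fin D, F i j (x j))
          = x i ^ 2 * ∏ j : Fin D, rexp (-b * x j ^ 2) := by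
        intro i
        rw [hF]
        simp only []
        rw [Finset.prod_mul_distrib, Finset.prod_ite_eq' Finset.univ i (fun j => x j ^ 2)]
        simp
      simp_rw [hprod]
      rw [← Finset.sum_mul, euclid_norm_symm_sq, ← Real.exp_sum, Finset.mul_sum]
    simp_rw [hfun]
    rw [integral_finset_sum (μ := volume) _ (fun i _ => Integrable.fintype_prod (f := F i) (fun j => hFint i j))]
    congr 1
    ext i
    exact integral_fintype_prod_eq_prod (fun j => F i j)
  rw [key]
  have hI0 : ∫ t : ℝ, rexp (-b * t ^ 2) = Real.sqrt (π / b) := by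
    simpa using integral_gaussian b
  have hprod : ∀ i : Fin D, (∏ j : Fin D, ∫ t : ℝ, F i j t)
      = (1 / (2 * b) * Real.sqrt (π / b)) * Real.sqrt (π / b) ^ (D - 1) := by
    intro i
    have hval : ∀ j, (∫ t : ℝ, F i j t)
        = if j = i then 1 / (2 * b) * Real.sqrt (π / b) else Real.sqrt (π / b) := by
      intro j
      by_cases h : j = i
      · rw [if_pos h]
        simp only [hF, h, if_pos rfl, if_true]
        rw [integral_sq_exp hb]
      · rw [if_neg h]
        simp only [hF, if_neg h, one_mul]
        exact hI0
    simp_rw [hval]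
    rw [← Finset.mul_prod_erase Finset.univ _ (Finset.mem_univ i), if_pos rfl]
    congr 1
    rw [Finset.prod_congr rfl (fun j hj => if_neg (Finset.ne_of_mem_erase hj)),
      Finset.prod_const, Finset.card_erase_of_mem (Finset.mem_univ i)]
    simp
  simp_rw [hprod]
  rw [Finset.sum_const, Finset.card_univ, Fintype.card_fin, nsmul_eq_mul]
  have hπb : (0:ℝ) ≤ π / b := by positivity
  have hpow : Real.sqrt (π / b) * Real.sqrt (π / b) ^ (D - 1) = (π / b) ^ ((D : ℝ) / 2) := by
    have h1 : Real.sqrt (π / b) * Real.sqrt (π / b) ^ (D - 1) = Real.sqrt (π / b) ^ D := by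
      rw [← pow_succ']
      congr 1
      omega
    rw [h1, Real.sqrt_eq_rpow, ← Real.rpow_natCast ((π / b) ^ ((1:ℝ)/2)) D,
      ← Real.rpow_mul hπb]
    rw [show (1:ℝ)/2 * (D:ℝ) = (D:ℝ)/2 by ring]
  rw [← hpow]; ring

lemma euclid_integrable_sq_exp {D : ℕ} {b : ℝ} (hb : 0 < b) :
    Integrable (fun v : EuclideanSpace ℝ (Fin D) => ‖v‖ ^ 2 * rexp (-b * ‖v‖ ^ 2)) := by
  classical
  set F : Fin D → Fin D → ℝ → ℝ :=
    fun i j t => (if j = i then t ^ 2 else 1) * rexp (-b * t ^ 2) with hF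
  have hFint : ∀ i j, Integrable (F i j) := by
    intro i j
    by_cases h : j = i
    · simpa [hF, h] using integrable_sq_exp hb
    · simpa [hF, h] using integrable_exp_neg_mul_sq hb
  rw [← ((EuclideanSpace.volume_preserving_symm_measurableEquiv_toLp (Fin D)).symm).integrable_comp_emb
    (MeasurableEquiv.measurableEmbedding _), MeasurableEquiv.symm_symm]
  have hfun : ((fun v : EuclideanSpace ℝ (Fin D) => ‖v‖ ^ 2 * rexp (-b * ‖v‖ ^ 2)) ∘
      (MeasurableEquiv.toLp 2 (Fin D → ℝ)))
      = fun x : Fin D → ℝ => ∑ i : Fin D, ∏ j : Fin D, F i j (x j) := by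
    ext x
    have hprod : ∀ i : Fin D, (∏ j : Fin D, F i j (x j))
        = x i ^ 2 * ∏ j : Fin D, rexp (-b * x j ^ 2) := by
      intro i
      rw [hF]
      simp only []
      rw [Finset.prod_mul_distrib, Finset.prod_ite_eq' Finset.univ i (fun j => x j ^ 2)]
      simp
    simp_rw [hprod]
    simp only [Function.comp_apply]
    rw [← Finset.sum_mul, euclid_norm_symm_sq, ← Real.exp_sum, Finset.mul_sum]
  rw [hfun]
  exact integrable_finset_sum _ (fun i _ => Integrable.fintype_prod (f := F i)
    (fun j => hFint i j))

set_option maxHeartbeats 2000000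

/-- Equality in the H-theorem for the BGK operator: the entropy dissipation
`∫ (M[f] − f) log f` vanishes if and only if `f = M[f]` almost everywhere,
where `M[f]` is the Maxwellian with the same number density, mean velocity and
temperature as `f`. -/
theorem bgk_entropy_dissipation_eq_zero_iff
    (D : ℕ) (hD : 1 ≤ D) (m : ℝ) (hm : 0 < m)
    (f : EuclideanSpace ℝ (Fin D) → ℝ)
    (hf_pos : ∀ᵐ v, 0 < f v)
    (hf_int : Integrable f)
    (hf_mom : Integrable (fun v => f v • v))
    (hf_en : Integrable (fun v => ‖v‖ ^ 2 * f v))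
    (n : ℝ) (hn_def : n = ∫ v, f v) (hn : 0 < n)
    (vb : EuclideanSpace ℝ (Fin D)) (hvb : n • vb = ∫ v, f v • v)
    (T : ℝ) (hT : 0 < T)
    (hT_def : (D : ℝ) / 2 * n * T = ∫ v, m / 2 * ‖v - vb‖ ^ 2 * f v)
    (hflogf : Integrable (fun v => f v * Real.log (f v)))
    (hflogM : Integrable (fun v => f v * Real.log (maxwellian D m n T vb v)))
    (hMlogf : Integrable (fun v => maxwellian D m n T vb v * Real.log (f v)))
    (hMlogM : Integrable (fun v =>
      maxwellian D m n T vb v * Real.log (maxwellian D m n T vb v))) :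
    (∫ v, (maxwellian D m n T vb v - f v) * Real.log (f v)) = 0 ↔
      f =ᵐ[volume] maxwellian D m n T vb := by
  have hπ := Real.pi_pos
  have hD' : 0 < D := hD
  set M := maxwellian D m n T vb with hM
  set c : ℝ := m / (2 * T) with hc
  have hc0 : 0 < c := by rw [hc]; positivity
  set C : ℝ := n * (m / (2 * Real.pi * T)) ^ ((D : ℝ) / 2) with hCdef
  clear_value M c C
  have hbase : (0:ℝ) < m / (2 * Real.pi * T) := by positivity
  have hC0 : 0 < C := by
    rw [hCdef]
    exact mul_pos hn (Real.rpow_pos_of_pos hbase _)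
  have hMv : ∀ v, M v = C * rexp (-c * ‖v - vb‖ ^ 2) := by
    intro v
    rw [hM]
    simp only [maxwellian]
    rw [← hCdef]
    congr 1
    rw [hc]
    ring
  have hM_pos : ∀ v, 0 < M v := by
    intro v
    rw [hMv v]
    positivity
  -- integrals of the Maxwellian
  have hIexp : ∫ v, rexp (-c * ‖v - vb‖ ^ 2) = (π / c) ^ ((D:ℝ)/2) := by
    rw [show (fun v : EuclideanSpace ℝ (Fin D) => rexp (-c * ‖v - vb‖ ^ 2))
      = fun v => (fun w : EuclideanSpace ℝ (Fin D) => rexp (-c * ‖w‖ ^ 2)) (v - vb) from rfl]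
    rw [integral_sub_right_eq_self (fun w : EuclideanSpace ℝ (Fin D) => rexp (-c * ‖w‖ ^ 2)) vb]
    exact euclid_integral_exp hc0
  have hIsq : ∫ v, ‖v - vb‖ ^ 2 * rexp (-c * ‖v - vb‖ ^ 2)
      = (D:ℝ)/(2*c) * (π / c) ^ ((D:ℝ)/2) := by
    rw [show (fun v : EuclideanSpace ℝ (Fin D) => ‖v - vb‖ ^ 2 * rexp (-c * ‖v - vb‖ ^ 2))
      = fun v => (fun w : EuclideanSpace ℝ (Fin D) => ‖w‖ ^ 2 * rexp (-c * ‖w‖ ^ 2)) (v - vb)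
        from rfl]
    rw [integral_sub_right_eq_self
      (fun w : EuclideanSpace ℝ (Fin D) => ‖w‖ ^ 2 * rexp (-c * ‖w‖ ^ 2)) vb]
    exact euclid_integral_sq_exp hD' hc0
  have hCpow : C * (π / c) ^ ((D:ℝ)/2) = n := by
    have h1 : m / (2 * Real.pi * T) = c / π := by
      rw [hc, div_div]
      congr 1
      ring
    rw [hCdef, h1, mul_assoc, ← Real.mul_rpow (by positivity) (by positivity),
      show c / π * (π / c) = 1 by field_simp, Real.one_rpow, mul_one]
  have hIM : Integrable M := by
    have h1 := (euclid_integrable_exp (D := D) hc0).comp_sub_right vb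
    have h2 := h1.const_mul C
    exact h2.congr (Filter.Eventually.of_forall fun v => (hMv v).symm)
  have hIsqM : Integrable (fun v => ‖v - vb‖ ^ 2 * M v) := by
    have h1 := (euclid_integrable_sq_exp (D := D) hc0).comp_sub_right vb
    have h2 := h1.const_mul C
    refine h2.congr (Filter.Eventually.of_forall fun v => ?_)
    show C * (‖v - vb‖ ^ 2 * rexp (-c * ‖v - vb‖ ^ 2)) = ‖v - vb‖ ^ 2 * M v
    rw [hMv v]; ring
  have hintM : ∫ v, M v = n := by
    simp_rw [hMv]
    rw [integral_const_mul, hIexp, hCpow]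
  have hintsqM : ∫ v, ‖v - vb‖ ^ 2 * M v = n * (D:ℝ) * T / m := by
    have : ∀ v, ‖v - vb‖ ^ 2 * M v = C * (‖v - vb‖ ^ 2 * rexp (-c * ‖v - vb‖ ^ 2)) := by
      intro v; rw [hMv v]; ring
    simp_rw [this]
    rw [integral_const_mul, hIsq]
    have : C * ((D:ℝ)/(2*c) * (π / c) ^ ((D:ℝ)/2))
        = (C * (π / c) ^ ((D:ℝ)/2)) * ((D:ℝ)/(2*c)) := by ring
    rw [this, hCpow, hc]
    field_simp
  -- integrability and integral of ‖v-vb‖² f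
  have hIsqf : Integrable (fun v => ‖v - vb‖ ^ 2 * f v) := by
    refine Integrable.mono' (g := fun v => 2*‖vb‖^2 * ‖f v‖ + 2 * (‖v‖^2 * ‖f v‖))
      ?_ ?_ (Filter.Eventually.of_forall fun v => ?_)
    · have hen : Integrable (fun v => ‖v‖^2 * ‖f v‖) := by
        refine hf_en.norm.congr (Filter.Eventually.of_forall fun v => ?_)
        show ‖‖v‖ ^ 2 * f v‖ = ‖v‖ ^ 2 * ‖f v‖
        rw [norm_mul, Real.norm_eq_abs (‖v‖^2), abs_of_nonneg (sq_nonneg ‖v‖)]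
      exact (hf_int.norm.const_mul _).add (hen.const_mul 2)
    · exact (((continuous_id.sub continuous_const).norm.pow 2).aestronglyMeasurable.mul
        hf_int.aestronglyMeasurable)
    · have h0 := norm_sub_le v vb
      have h1 : ‖v - vb‖ ^ 2 ≤ 2*‖v‖^2 + 2*‖vb‖^2 := by
        nlinarith [sq_nonneg (‖v‖ - ‖vb‖), norm_nonneg (v - vb), norm_nonneg v, norm_nonneg vb]
      have h2 : ‖‖v - vb‖ ^ 2 * f v‖ = ‖v - vb‖ ^ 2 * ‖f v‖ := by
        rw [norm_mul, Real.norm_eq_abs (‖v - vb‖^2), abs_of_nonneg (sq_nonneg ‖v - vb‖)]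
      show ‖‖v - vb‖ ^ 2 * f v‖ ≤ 2*‖vb‖^2 * ‖f v‖ + 2 * (‖v‖^2 * ‖f v‖)
      rw [h2]
      nlinarith [mul_le_mul_of_nonneg_right h1 (norm_nonneg (f v))]
  have hintsqf : ∫ v, ‖v - vb‖ ^ 2 * f v = n * (D:ℝ) * T / m := by
    have h1 : ∀ v, m / 2 * ‖v - vb‖ ^ 2 * f v = m / 2 * (‖v - vb‖ ^ 2 * f v) := by
      intro v; ring
    rw [show ∫ v, m / 2 * ‖v - vb‖ ^ 2 * f v = ∫ v, m / 2 * (‖v - vb‖ ^ 2 * f v) from by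
      simp_rw [h1], integral_const_mul] at hT_def
    have hm2 : m / 2 ≠ 0 := by positivity
    field_simp at hT_def ⊢
    linarith
  have hintf : ∫ v, f v = n := hn_def.symm
  -- log of the Maxwellian
  have hlogM : ∀ v, Real.log (M v) = Real.log C - c * ‖v - vb‖ ^ 2 := by
    intro v
    rw [hMv v, Real.log_mul hC0.ne' (Real.exp_ne_zero _), Real.log_exp]
    ring
  -- the cross term vanishes
  have h2 : ∫ v, M v * Real.log (M v) = Real.log C * n - c * (n * (D:ℝ) * T / m) := by
    have he : ∀ v, M v * Real.log (M v)
        = Real.log C * M v - c * (‖v - vb‖ ^ 2 * M v) := by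
      intro v; rw [hlogM v]; ring
    simp_rw [he]
    rw [integral_sub (hIM.const_mul _) (hIsqM.const_mul c), integral_const_mul,
      integral_const_mul, hintM, hintsqM]
  have h3 : ∫ v, f v * Real.log (M v) = Real.log C * n - c * (n * (D:ℝ) * T / m) := by
    have he : ∀ v, f v * Real.log (M v)
        = Real.log C * f v - c * (‖v - vb‖ ^ 2 * f v) := by
      intro v; rw [hlogM v]; ring
    simp_rw [he]
    rw [integral_sub (hf_int.const_mul _) (hIsqf.const_mul c), integral_const_mul,
      integral_const_mul, hintf, hintsqf]
  have E0 : ∫ v, (M v - f v) * Real.log (M v) = 0 := by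
    have he : ∀ v, (M v - f v) * Real.log (M v)
        = M v * Real.log (M v) - f v * Real.log (M v) := fun v => by ring
    simp_rw [he]
    rw [integral_sub hMlogM hflogM, h2, h3, sub_self]
  -- the dissipation functional
  set g : EuclideanSpace ℝ (Fin D) → ℝ :=
    fun v => (M v - f v) * (Real.log (f v) - Real.log (M v)) with hg
  clear_value g
  have hg_int : Integrable g := by
    have he : g = fun v => (M v * Real.log (f v) - f v * Real.log (f v))
        - (M v * Real.log (M v) - f v * Real.log (M v)) := by
      funext v; rw [hg]; ring
    rw [he]
    exact (hMlogf.sub hflogf).sub (hMlogM.sub hflogM)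
  have h4 : Integrable (fun v => (M v - f v) * Real.log (f v)) := by
    refine (hMlogf.sub hflogf).congr (Filter.Eventually.of_forall fun v => ?_)
    simp only [Pi.sub_apply]
    ring
  have h5 : Integrable (fun v => (M v - f v) * Real.log (M v)) := by
    refine (hMlogM.sub hflogM).congr (Filter.Eventually.of_forall fun v => ?_)
    simp only [Pi.sub_apply]
    ring
  have hgval : ∫ v, g v = ∫ v, (M v - f v) * Real.log (f v) := by
    have he : ∀ v, g v = (M v - f v) * Real.log (f v) - (M v - f v) * Real.log (M v) := by
      intro v; rw [hg]; ring
    simp_rw [he]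
    rw [integral_sub h4 h5, E0, sub_zero]
  have hgdef : ∀ v, g v = (M v - f v) * (Real.log (f v) - Real.log (M v)) := fun v => by
    rw [hg]
  constructor
  · intro h0
    have hZ : ∫ v, -g v = 0 := by
      rw [integral_neg, hgval, h0, neg_zero]
    have hnn : 0 ≤ᵐ[volume] fun v => -g v := by
      filter_upwards [hf_pos] with v hv
      have hMp := hM_pos v
      have hle0 : g v ≤ 0 := by
        rw [hgdef v]
        rcases le_total (f v) (M v) with hle | hle
        · exact mul_nonpos_iff.mpr (Or.inl ⟨by linarith,
            sub_nonpos.mpr (Real.log_le_log hv hle)⟩)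
        · exact mul_nonpos_iff.mpr (Or.inr ⟨by linarith,
            sub_nonneg.mpr (Real.log_le_log hMp hle)⟩)
      simpa using neg_nonneg.mpr hle0
    have hae := (integral_eq_zero_iff_of_nonneg_ae hnn hg_int.neg).mp hZ
    filter_upwards [hae, hf_pos] with v hv0 hvf
    have hgv : g v = 0 := by simpa using hv0
    show f v = M v
    by_contra hne
    rcases lt_or_gt_of_ne hne with hlt | hlt
    · have hneg : g v < 0 := by
        rw [hgdef v]
        exact mul_neg_of_pos_of_neg (by linarith) (sub_neg.mpr (Real.log_lt_log hvf hlt))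
      linarith
    · have hneg : g v < 0 := by
        rw [hgdef v]
        exact mul_neg_of_neg_of_pos (by linarith) (sub_pos.mpr (Real.log_lt_log (hM_pos v) hlt))
      linarith
  · intro hfM
    have he : (fun v => (M v - f v) * Real.log (f v)) =ᵐ[volume] 0 := by
      filter_upwards [hfM] with v hv
      simp [hv]
    rw [integral_congr_ae he]
    simp
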